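/- Let B_1, ..., B_K ∈ M_n(ℂ) and let {1,...,K} be partitioned into g groups G_1, ..., G_g. Assume the cross condition B_iᴴ B_j + B_jᴴ B_i = 0 whenever i and j lie in different groups. For x ∈ ℝ^K set S(x) = Σ_{i=1}^K x_i B_i and S_k(x) = Σ_{i∈G_k} x_i B_i. Then for all y, z ∈ ℂ^n, ‖y − S(x) z‖² = Σ_{k=1}^g ‖y − S_k(x) z‖² − (g−1)‖y‖². In particular, the decoding metric ‖y_t − (1/a_{t−1}) S(x) y_{t−1}‖² decomposes, up to a constant independent of x, into a sum of g terms, the k-th depending only on the variables in group G_k. -/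

import Mathlib

open Matrix

namespace DDSTC

/-- if the weight matrices of different groups satisfy
`B_iᴴ B_j + B_jᴴ B_i = 0`, then for `S(x) = Σ_i x_i B_i` and the group sums
`S_k(x) = Σ_{i ∈ G_k} x_i B_i` one has, for all `y, z ∈ ℂ^n`,
`‖y - S(x) z‖² = Σ_k ‖y - S_k(x) z‖² - (g-1) ‖y‖²`. -/
theorem stmt11 (n K g : ℕ) (B : Fin K → Matrix (Fin n) (Fin n) ℂ)
    (grp : Fin K → Fin g)
    (hcross : ∀ i j : Fin K, grp i ≠ grp j → (B i)ᴴ * B j + (B j)ᴴ * B i = 0)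
    (x : Fin K → ℝ) (y z : Fin n → ℂ) :
    ∑ t, ‖y t - (∑ i, (x i : ℂ) • B i).mulVec z t‖ ^ 2 =
      (∑ k : Fin g, ∑ t, ‖y t -
          (∑ i ∈ Finset.univ.filter fun i => grp i = k, (x i : ℂ) • B i).mulVec z t‖ ^ 2)
        - ((g : ℝ) - 1) * ∑ t, ‖y t‖ ^ 2 := by
  classical
  set Sm : Fin g → Matrix (Fin n) (Fin n) ℂ :=
    fun k => ∑ i ∈ Finset.univ.filter fun i => grp i = k, (x i : ℂ) • B i with hSm
  have hS : (∑ i, (x i : ℂ) • B i) = ∑ k, Sm k :=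
    (Finset.sum_fiberwise _ _ _).symm
  -- cross matrix identity
  have hcrossS : ∀ k l : Fin g, k ≠ l → (Sm k)ᴴ * Sm l + (Sm l)ᴴ * Sm k = 0 := by
    intro k l hkl
    simp only [hSm, conjTranspose_sum, conjTranspose_smul, Complex.star_def,
      Complex.conj_ofReal, Finset.sum_mul, Finset.mul_sum, smul_mul_assoc, mul_smul_comm,
      Finset.smul_sum]
    rw [Finset.sum_comm]
    rw [← Finset.sum_add_distrib]
    refine Finset.sum_eq_zero fun i hi => ?_
    rw [← Finset.sum_add_distrib]
    refine Finset.sum_eq_zero fun j hj => ?_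
    have hgi : grp i = k := (Finset.mem_filter.mp hi).2
    have hgj : grp j = l := (Finset.mem_filter.mp hj).2
    have hij : grp i ≠ grp j := by rw [hgi, hgj]; exact hkl
    rw [smul_comm ((x i : ℂ)) ((x j : ℂ))]
    rw [← smul_add, ← smul_add, hcross i j hij, smul_zero, smul_zero]
  -- the quadratic form
  set Q : (Fin n → ℂ) → (Fin n → ℂ) → ℝ := fun a b => (star a ⬝ᵥ b).re with hQ
  have key : ∀ a b : ℂ, ‖a - b‖ ^ 2 = ‖a‖ ^ 2 - 2 * ((starRingEnd ℂ) a * b).re + ‖b‖ ^ 2 := by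
    intro a b
    simp only [Complex.sq_norm, Complex.normSq_apply,
      Complex.sub_re, Complex.sub_im, Complex.mul_re, Complex.conj_re, Complex.conj_im]
    try ring
  have hnorm : ∀ a b : Fin n → ℂ, ∑ t, ‖a t - b t‖ ^ 2
      = (∑ t, ‖a t‖ ^ 2) - 2 * Q a b + Q b b := by
    intro a b
    have hQbb : Q b b = ∑ t, ‖b t‖ ^ 2 := by
      simp [hQ, dotProduct, Complex.re_sum, Complex.sq_norm,
        Complex.normSq_apply, Complex.mul_re]
      try ring_nf
    have hQab : Q a b = ∑ t, ((starRingEnd ℂ) (a t) * b t).re := by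
      simp [hQ, dotProduct, Complex.re_sum]
    rw [hQab, hQbb, Finset.mul_sum, ← Finset.sum_sub_distrib, ← Finset.sum_add_distrib]
    exact Finset.sum_congr rfl fun t _ => key (a t) (b t)
  have hQsymm : ∀ a b, Q a b = Q b a := by
    intro a b
    simp only [hQ, dotProduct, Complex.re_sum, Pi.star_apply]
    refine Finset.sum_congr rfl fun t _ => ?_
    simp [Complex.mul_re, Complex.conj_re, Complex.conj_im]
    ring
  have hdot : ∀ k l : Fin g, star ((Sm k).mulVec z) ⬝ᵥ (Sm l).mulVec z
      = star z ⬝ᵥ ((Sm k)ᴴ * Sm l).mulVec z := by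
    intro k l
    rw [star_mulVec, dotProduct_mulVec, vecMul_vecMul, dotProduct_mulVec]
  have hQzero : ∀ k l : Fin g, k ≠ l → Q ((Sm k).mulVec z) ((Sm l).mulVec z) = 0 := by
    intro k l hkl
    have h2 : Q ((Sm k).mulVec z) ((Sm l).mulVec z)
        + Q ((Sm l).mulVec z) ((Sm k).mulVec z) = 0 := by
      simp only [hQ, hdot]
      rw [← Complex.add_re, ← dotProduct_add, ← add_mulVec, hcrossS k l hkl]
      simp
    have h3 := hQsymm ((Sm k).mulVec z) ((Sm l).mulVec z)
    linarith [h2, h3]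
  -- linearity facts
  have hw : (∑ i, (x i : ℂ) • B i).mulVec z = ∑ k, (Sm k).mulVec z := by
    rw [hS]
    funext t
    simp only [Matrix.mulVec, dotProduct, Matrix.sum_apply, Finset.sum_apply, Finset.sum_mul]
    rw [Finset.sum_comm]
  have hdsum : ∀ (a : Fin n → ℂ) (v : Fin g → Fin n → ℂ),
      Q a (∑ k, v k) = ∑ k, Q a (v k) := by
    intro a v
    simp only [hQ, dotProduct, Finset.sum_apply, Finset.mul_sum, Complex.re_sum]
    exact Finset.sum_comm
  have hQy : Q y ((∑ i, (x i : ℂ) • B i).mulVec z) = ∑ k, Q y ((Sm k).mulVec z) := by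
    rw [hw]; exact hdsum _ _
  have hQww : Q ((∑ i, (x i : ℂ) • B i).mulVec z) ((∑ i, (x i : ℂ) • B i).mulVec z)
      = ∑ k, Q ((Sm k).mulVec z) ((Sm k).mulVec z) := by
    rw [hw]
    rw [hQsymm, hdsum]
    refine Finset.sum_congr rfl fun k _ => ?_
    rw [hQsymm, hdsum]
    rw [Finset.sum_eq_single k]
    · intro l _ hlk; exact hQzero k l (Ne.symm hlk)
    · intro h; exact absurd (Finset.mem_univ k) h
  -- assemble
  rw [hnorm y ((∑ i, (x i : ℂ) • B i).mulVec z), hQy, hQww]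
  have hR : ∀ k : Fin g, (∑ t, ‖y t - (Sm k).mulVec z t‖ ^ 2)
      = (∑ t, ‖y t‖ ^ 2) - 2 * Q y ((Sm k).mulVec z) + Q ((Sm k).mulVec z) ((Sm k).mulVec z) :=
    fun k => hnorm y ((Sm k).mulVec z)
  simp +zetaDelta only [hR]
  rw [Finset.sum_add_distrib, Finset.sum_sub_distrib, Finset.sum_const, Finset.card_univ,
    Fintype.card_fin, ← Finset.mul_sum]
  ring
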